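/- Let π = a_1a_2⋯a_n ∈ S_n be a separable permutation with a_1 > a_n. Then π = π_A π_B where, for some 1 ≤ m < n, π_A is a permutation of the letters {n−m+1,…,n} and π_B is a permutation of the letters {1,…,n−m}, and F(V_π, q) = F(V_{σ_A}, q) · F(V_{σ_B}, q), where σ_A ∈ S_m is obtained from π_A by subtracting n−m from each letter, σ_B ∈ S_{n−m} is π_B, and V_{σ_A}, V_{σ_B} are intervals in S_m and S_{n−m} respectively. -/

import Mathlib

open Polynomial

namespace SepPerm

/-- The length (number of inversions) of a permutation of `Fin n`. -/
def invCount {n : ℕ} (π : Equiv.Perm (Fin n)) : ℕ :=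
  (Finset.univ.filter fun p : Fin n × Fin n => p.1 < p.2 ∧ π p.2 < π p.1).card

/-- The (right) weak Bruhat order: `u ≤ v` iff `ℓ(u) + ℓ(u⁻¹v) = ℓ(v)`. -/
def wle {n : ℕ} (u v : Equiv.Perm (Fin n)) : Prop :=
  invCount u + invCount (u⁻¹ * v) = invCount v

open scoped Classical in
/-- `F(Λ_π, q) = ∑_{u ≤ π} q^{ℓ(u)}`, rank generating function of `[id, π]`. -/
noncomputable def FLam {n : ℕ} (π : Equiv.Perm (Fin n)) : Polynomial ℤ :=
  ∑ u ∈ Finset.univ.filter (fun u => wle u π), X ^ invCount u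

open scoped Classical in
/-- `F(V_π, q) = ∑_{v ≥ π} q^{ℓ(v) - ℓ(π)}`, rank generating function of `[π, w₀]`. -/
noncomputable def FV {n : ℕ} (π : Equiv.Perm (Fin n)) : Polynomial ℤ :=
  ∑ v ∈ Finset.univ.filter (fun v => wle π v), X ^ (invCount v - invCount π)

/-- A permutation is separable iff it avoids the patterns 3142 and 2413. -/
def IsSeparable {n : ℕ} (π : Equiv.Perm (Fin n)) : Prop :=
  (¬ ∃ i j k h : Fin n, i < j ∧ j < k ∧ k < h ∧
      π j < π h ∧ π h < π i ∧ π i < π k) ∧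
  (¬ ∃ i j k h : Fin n, i < j ∧ j < k ∧ k < h ∧
      π k < π i ∧ π i < π h ∧ π h < π j)

/-- The longest element `w₀ = n, n-1, …, 1`. -/
def w0 (n : ℕ) : Equiv.Perm (Fin n) := Fin.revPerm

/-- The complement `π^c`, with `π^c(i) = n + 1 - π(i)` (one-indexed). -/
def compl {n : ℕ} (π : Equiv.Perm (Fin n)) : Equiv.Perm (Fin n) := w0 n * π

/-- `[k] = 1 + q + ⋯ + q^{k-1}`. -/
noncomputable def qnum (k : ℕ) : Polynomial ℤ := ∑ i ∈ Finset.range k, X ^ i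

/-- `[N]! = [1][2]⋯[N]`. -/
noncomputable def qfact (N : ℕ) : Polynomial ℤ := ∏ k ∈ Finset.range N, qnum (k + 1)

/-- The inversion poset `P_π` on the letters: `x ≤_P y` iff `x ≤ y` and `π⁻¹x ≤ π⁻¹y`. -/
def invLe {n : ℕ} (π : Equiv.Perm (Fin n)) (x y : Fin n) : Prop :=
  x ≤ y ∧ π⁻¹ x ≤ π⁻¹ y

/-- `σ` is a linear extension of the order `r`: whenever `i <_r j`, `i` precedes `j`
in the one-line notation of `σ` (i.e. the position `σ⁻¹ i` comes before `σ⁻¹ j`). -/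
def IsLinExt {N : ℕ} (r : Fin N → Fin N → Prop) (σ : Equiv.Perm (Fin N)) : Prop :=
  ∀ i j, r i j → i ≠ j → σ.symm i < σ.symm j

open scoped Classical in
/-- `F(𝓛(P), q) = ∑_{σ ∈ 𝓛(P)} q^{ℓ(σ)}`, generating function of linear extensions
by number of inversions. -/
noncomputable def FLin {N : ℕ} (r : Fin N → Fin N → Prop) : Polynomial ℤ :=
  ∑ σ ∈ Finset.univ.filter (fun σ => IsLinExt r σ), X ^ invCount σ


section Aux
open Finset
variable {n : ℕ}

theorem perm_apply_inv_self' {α : Type*} (f : Equiv.Perm α) (x : α) : f (f⁻¹ x) = x :=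
  f.apply_symm_apply x

theorem perm_inv_apply_self' {α : Type*} (f : Equiv.Perm α) (x : α) : f⁻¹ (f x) = x :=
  f.symm_apply_apply x


private lemma card_reindex (z : Equiv.Perm (Fin n)) (P Q : Fin n × Fin n → Prop)
    [DecidablePred P] [DecidablePred Q]
    (h : ∀ p : Fin n × Fin n, P p ↔ Q (z p.1, z p.2)) :
    (univ.filter P).card = (univ.filter Q).card := by
  apply Finset.card_bij (fun p _ => ((z p.1, z p.2) : Fin n × Fin n))
  · intro a ha
    simp only [mem_filter, mem_univ, true_and] at ha ⊢
    exact (h a).1 ha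
  · intro a _ b _ hab
    have h1 : z a.1 = z b.1 := congrArg Prod.fst hab
    have h2 : z a.2 = z b.2 := congrArg Prod.snd hab
    exact Prod.ext (z.injective h1) (z.injective h2)
  · intro b hb
    refine ⟨(z⁻¹ b.1, z⁻¹ b.2), ?_, by simp⟩
    simp only [mem_filter, mem_univ, true_and] at hb ⊢
    rw [h]; simpa using hb

theorem wle_iff (u v : Equiv.Perm (Fin n)) :
    wle u v ↔ ∀ p q : Fin n, p < q → u q < u p → v⁻¹ (u p) < v⁻¹ (u q) := by
  classical
  set z := u⁻¹ * v with hzdef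
  have hv : u * z = v := by rw [hzdef]; group
  have hzi : ∀ a : Fin n, z⁻¹ a = v⁻¹ (u a) := by
    intro a; rw [hzdef]; simp [Equiv.Perm.mul_apply]
  -- rewrite invCount z
  have hz_card : invCount z =
      (univ.filter fun p : Fin n × Fin n => z⁻¹ p.1 < z⁻¹ p.2 ∧ p.2 < p.1).card := by
    apply card_reindex z
    intro p; simp
  have hv_card : invCount v =
      (univ.filter fun p : Fin n × Fin n => z⁻¹ p.1 < z⁻¹ p.2 ∧ u p.2 < u p.1).card := by
    rw [← hv]
    apply card_reindex z
    intro p; simp [Equiv.Perm.mul_apply]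
  -- splits
  have splitu := Finset.card_filter_add_card_filter_not
    (s := univ.filter fun p : Fin n × Fin n => p.1 < p.2 ∧ u p.2 < u p.1)
    (fun p : Fin n × Fin n => z⁻¹ p.1 < z⁻¹ p.2)
  have splitz := Finset.card_filter_add_card_filter_not
    (s := univ.filter fun p : Fin n × Fin n => z⁻¹ p.1 < z⁻¹ p.2 ∧ p.2 < p.1)
    (fun p : Fin n × Fin n => u p.2 < u p.1)
  have splitv := Finset.card_filter_add_card_filter_not
    (s := univ.filter fun p : Fin n × Fin n => z⁻¹ p.1 < z⁻¹ p.2 ∧ u p.2 < u p.1)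
    (fun p : Fin n × Fin n => p.1 < p.2)
  rw [Finset.filter_filter, Finset.filter_filter] at splitu splitz splitv
  set A1 := (univ.filter fun p : Fin n × Fin n =>
      (p.1 < p.2 ∧ u p.2 < u p.1) ∧ z⁻¹ p.1 < z⁻¹ p.2) with hA1
  set A2 := (univ.filter fun p : Fin n × Fin n =>
      (p.1 < p.2 ∧ u p.2 < u p.1) ∧ ¬ z⁻¹ p.1 < z⁻¹ p.2) with hA2
  set Z1 := (univ.filter fun p : Fin n × Fin n =>
      (z⁻¹ p.1 < z⁻¹ p.2 ∧ p.2 < p.1) ∧ u p.2 < u p.1) with hZ1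
  set Z2 := (univ.filter fun p : Fin n × Fin n =>
      (z⁻¹ p.1 < z⁻¹ p.2 ∧ p.2 < p.1) ∧ ¬ u p.2 < u p.1) with hZ2
  -- V1 = A1, V2 = Z1
  have hV1 : (univ.filter fun p : Fin n × Fin n =>
      (z⁻¹ p.1 < z⁻¹ p.2 ∧ u p.2 < u p.1) ∧ p.1 < p.2) = A1 := by
    rw [hA1]; apply Finset.filter_congr; intro p _; tauto
  have hV2 : (univ.filter fun p : Fin n × Fin n =>
      (z⁻¹ p.1 < z⁻¹ p.2 ∧ u p.2 < u p.1) ∧ ¬ p.1 < p.2) = Z1 := by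
    rw [hZ1]; apply Finset.filter_congr; intro p _
    constructor
    · rintro ⟨⟨h1, h2⟩, h3⟩
      have hne : p.1 ≠ p.2 := fun h => by rw [h] at h1; exact lt_irrefl _ h1
      exact ⟨⟨h1, lt_of_le_of_ne (not_lt.1 h3) (Ne.symm hne)⟩, h2⟩
    · rintro ⟨⟨h1, h2⟩, h3⟩
      exact ⟨⟨h1, h3⟩, not_lt.2 h2.le⟩
  rw [hV1, hV2] at splitv
  -- A2.card = Z2.card via swap
  have hswap : A2.card = Z2.card := by
    apply Finset.card_bij (fun p _ => Prod.swap p)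
    · intro a ha
      rw [hA2] at ha; rw [hZ2]
      simp only [mem_filter, mem_univ, true_and] at ha ⊢
      obtain ⟨⟨h1, h2⟩, h3⟩ := ha
      refine ⟨⟨?_, h1⟩, not_lt.2 h2.le⟩
      have hne : z⁻¹ a.1 ≠ z⁻¹ a.2 := fun h => by
        have := z⁻¹.injective h
        rw [this] at h1; exact lt_irrefl _ h1
      exact lt_of_le_of_ne (not_lt.1 h3) hne.symm
    · intro a _ b _ hab
      exact Prod.swap_injective hab
    · intro b hb
      refine ⟨Prod.swap b, ?_, by simp⟩
      rw [hZ2] at hb; rw [hA2]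
      simp only [mem_filter, mem_univ, true_and, Prod.fst_swap, Prod.snd_swap] at hb ⊢
      obtain ⟨⟨h1, h2⟩, h3⟩ := hb
      refine ⟨⟨h2, ?_⟩, not_lt.2 h1.le⟩
      have hne : u b.2 ≠ u b.1 := fun h => by
        have := u.injective h
        rw [this] at h2; exact lt_irrefl _ h2
      exact lt_of_le_of_ne (not_lt.1 h3) hne.symm
  -- put together
  have hu : invCount u = A1.card + A2.card := splitu.symm
  have hz : invCount z = Z1.card + Z2.card := by rw [hz_card]; exact splitz.symm
  have hvv : invCount v = A1.card + Z1.card := by rw [hv_card]; exact splitv.symm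
  have key : wle u v ↔ A2 = ∅ := by
    unfold wle
    rw [← hzdef, hu, hz, hvv, hswap]
    constructor
    · intro h
      have : Z2.card = 0 := by omega
      rw [← hswap] at this
      exact Finset.card_eq_zero.1 this
    · intro h
      have h0 : A2.card = 0 := by rw [h]; simp
      omega
  rw [key, Finset.eq_empty_iff_forall_notMem]
  constructor
  · intro h p q hpq hu2
    have := h (p, q)
    rw [hA2] at this
    simp only [mem_filter, mem_univ, true_and, not_and, not_not] at this
    have := this ⟨hpq, hu2⟩
    rw [hzi, hzi] at this
    exact this
  · intro h p hp
    rw [hA2] at hp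
    simp only [mem_filter, mem_univ, true_and] at hp
    obtain ⟨⟨h1, h2⟩, h3⟩ := hp
    exact h3 (by rw [hzi, hzi]; exact h p.1 p.2 h1 h2)



lemma card_filter_lt_fin (n : ℕ) (b : Fin n) :
    (univ.filter (fun x => x < b)).card = (b:ℕ) := by
  rw [show (univ.filter (fun x => x < b)) = Iio b from by ext; simp]
  simpa using Fin.card_Iio b

lemma card_filter_gt_fin (n : ℕ) (b : Fin n) :
    (univ.filter (fun x => b < x)).card = n - 1 - (b:ℕ) := by
  rw [show (univ.filter (fun x => b < x)) = Ioi b from by ext; simp]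
  simpa using Fin.card_Ioi b

/-- Existence of a skew cut for a 3142-avoiding permutation with first > last. -/
lemma exists_cut {n : ℕ} (hn : 0 < n) (π : Equiv.Perm (Fin n))
    (hsep1 : ¬ ∃ i j k h : Fin n, i < j ∧ j < k ∧ k < h ∧
      π j < π h ∧ π h < π i ∧ π i < π k)
    (hfl : π ⟨n - 1, Nat.sub_lt hn Nat.one_pos⟩ < π ⟨0, hn⟩) :
    ∃ m, 1 ≤ m ∧ m < n ∧ ∀ i j : Fin n, (i:ℕ) < m → m ≤ (j:ℕ) → π j < π i := by
  have hn2 : 2 ≤ n := by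
    by_contra h
    have hn1 : n = 1 := by omega
    have : (⟨n-1, by omega⟩ : Fin n) = ⟨0, hn⟩ := by subst hn1; rfl
    rw [this] at hfl
    exact lt_irrefl _ hfl
  by_contra hcon
  push_neg at hcon
  have H : ∀ m, 1 ≤ m → m < n → ∃ i j : Fin n, (i:ℕ) < m ∧ m ≤ (j:ℕ) ∧ π i < π j := by
    intro m h1 h2
    obtain ⟨i, j, hi, hj, hij⟩ := hcon m h1 h2
    refine ⟨i, j, hi, hj, ?_⟩
    have hne : π i ≠ π j := fun h => by
      have := π.injective h
      have : (i:ℕ) = (j:ℕ) := congrArg Fin.val this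
      omega
    exact lt_of_le_of_ne hij hne
  have main : ∀ k, 1 ≤ k → k ≤ n - 1 → ∃ j : Fin n, k ≤ (j:ℕ) ∧ π ⟨0, hn⟩ < π j := by
    intro k
    induction k with
    | zero => intro h; omega
    | succ k ih =>
      intro _ h2
      by_cases hk : k = 0
      · subst hk
        obtain ⟨i, j, hi, hj, hij⟩ := H 1 (by omega) (by omega)
        have : i = ⟨0, hn⟩ := by apply Fin.ext; simp only [Fin.val_mk]; omega
        exact ⟨j, hj, this ▸ hij⟩
      · obtain ⟨j, hj, hj2⟩ := ih (by omega) (by omega)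
        by_cases hcase : k + 1 ≤ (j:ℕ)
        · exact ⟨j, hcase, hj2⟩
        · have hjk : (j:ℕ) = k := by omega
          obtain ⟨i, j', hi, hj', hlt⟩ := H (k+1) (by omega) (by omega)
          by_cases hi0 : (i:ℕ) = 0
          · have : i = ⟨0, hn⟩ := Fin.ext hi0
            exact ⟨j', hj', this ▸ hlt⟩
          by_cases hik : (i:ℕ) = k
          · have : i = j := Fin.ext (by omega)
            exact ⟨j', hj', lt_trans (this ▸ hj2) hlt⟩
          by_cases hfin : π ⟨0, hn⟩ < π j'
          · exact ⟨j', hj', hfin⟩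
          exfalso
          apply hsep1
          have hj'0 : π j' ≠ π ⟨0, hn⟩ := fun h => by
            have := congrArg Fin.val (π.injective h)
            simp at this
            omega
          refine ⟨⟨0, hn⟩, i, j, j', ?_, ?_, ?_, hlt, lt_of_le_of_ne (not_lt.1 hfin) hj'0, hj2⟩
          · show (⟨0, hn⟩ : Fin n) < i
            exact Fin.lt_def.2 (by simp only [Fin.val_mk]; omega)
          · show i < j
            exact Fin.lt_def.2 (by omega)
          · show j < j'
            exact Fin.lt_def.2 (by omega)
  obtain ⟨j, hj1, hj2⟩ := main (n-1) (by omega) le_rfl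
  have : j = ⟨n-1, by omega⟩ := by apply Fin.ext; simp only [Fin.val_mk]; have := j.2; omega
  rw [this] at hj2
  exact lt_asymm hfl hj2


end Aux

section Skew
open Finset
variable {n m : ℕ}


def skewf (h : m ≤ n) (vA : Equiv.Perm (Fin m)) (vB : Equiv.Perm (Fin (n - m)))
    (i : Fin n) : Fin n :=
  if hi : (i : ℕ) < m then
    ⟨(vA ⟨i, hi⟩ : ℕ) + (n - m), by have := (vA ⟨i, hi⟩).2; omega⟩
  else
    ⟨(vB ⟨(i : ℕ) - m, by have := i.2; omega⟩ : ℕ),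
      by have := (vB ⟨(i : ℕ) - m, by have := i.2; omega⟩).2; omega⟩

lemma skewf_injective (h : m ≤ n) (vA : Equiv.Perm (Fin m)) (vB : Equiv.Perm (Fin (n - m))) :
    Function.Injective (skewf h vA vB) := by
  intro i j heq
  unfold skewf at heq
  by_cases hi : (i : ℕ) < m <;> by_cases hj : (j : ℕ) < m
  · rw [dif_pos hi, dif_pos hj] at heq
    have := congrArg Fin.val heq
    simp only [Fin.val_mk] at this
    have h2 : vA ⟨i, hi⟩ = vA ⟨j, hj⟩ := Fin.ext (by omega)
    have := congrArg Fin.val (vA.injective h2)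
    exact Fin.ext (by simpa using this)
  · rw [dif_pos hi, dif_neg hj] at heq
    have := congrArg Fin.val heq
    simp only [Fin.val_mk] at this
    have := (vB ⟨(j : ℕ) - m, by have := j.2; omega⟩).2
    omega
  · rw [dif_neg hi, dif_pos hj] at heq
    have := congrArg Fin.val heq
    simp only [Fin.val_mk] at this
    have := (vB ⟨(i : ℕ) - m, by have := i.2; omega⟩).2
    omega
  · rw [dif_neg hi, dif_neg hj] at heq
    have := congrArg Fin.val heq
    simp only [Fin.val_mk] at this
    have h2 : vB ⟨(i : ℕ) - m, by have := i.2; omega⟩ = vB ⟨(j : ℕ) - m, by have := j.2; omega⟩ :=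
      Fin.ext (by omega)
    have := congrArg Fin.val (vB.injective h2)
    simp only [Fin.val_mk] at this
    exact Fin.ext (by omega)

noncomputable def skew (h : m ≤ n) (vA : Equiv.Perm (Fin m)) (vB : Equiv.Perm (Fin (n - m))) :
    Equiv.Perm (Fin n) :=
  Equiv.ofBijective (skewf h vA vB)
    ((Finite.injective_iff_bijective).1 (skewf_injective h vA vB))

lemma skew_apply (h : m ≤ n) (vA : Equiv.Perm (Fin m)) (vB : Equiv.Perm (Fin (n - m)))
    (i : Fin n) : skew h vA vB i = skewf h vA vB i := rfl

lemma skew_apply_lt (h : m ≤ n) (vA : Equiv.Perm (Fin m)) (vB : Equiv.Perm (Fin (n - m)))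
    (i : Fin n) (hi : (i : ℕ) < m) :
    (skew h vA vB i : ℕ) = (vA ⟨i, hi⟩ : ℕ) + (n - m) := by
  rw [skew_apply]; unfold skewf; rw [dif_pos hi]

lemma skew_apply_ge (h : m ≤ n) (vA : Equiv.Perm (Fin m)) (vB : Equiv.Perm (Fin (n - m)))
    (i : Fin n) (hi : ¬ (i : ℕ) < m) :
    (skew h vA vB i : ℕ) = (vB ⟨(i : ℕ) - m, by have := i.2; omega⟩ : ℕ) := by
  rw [skew_apply]; unfold skewf; rw [dif_neg hi]

lemma skew_inv_ge (h : m ≤ n) (vA : Equiv.Perm (Fin m)) (vB : Equiv.Perm (Fin (n - m)))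
    (x : Fin n) (hx : n - m ≤ (x : ℕ)) :
    ((skew h vA vB)⁻¹ x : ℕ) = (vA⁻¹ ⟨(x : ℕ) - (n - m), by have := x.2; omega⟩ : ℕ) := by
  set a : Fin m := vA⁻¹ ⟨(x : ℕ) - (n - m), by have := x.2; omega⟩ with ha
  have hY : (⟨(a : ℕ), lt_of_lt_of_le a.2 h⟩ : Fin n) = (skew h vA vB)⁻¹ x := by
    apply (skew h vA vB).injective
    rw [perm_apply_inv_self']
    apply Fin.ext
    rw [skew_apply_lt h vA vB _ (by simpa using a.2)]
    have : (⟨(⟨(a : ℕ), lt_of_lt_of_le a.2 h⟩ : Fin n), by simpa using a.2⟩ : Fin m) = a :=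
      Fin.ext rfl
    rw [this, ha]
    simp only [perm_apply_inv_self', Fin.val_mk]
    omega
  rw [← hY]

lemma skew_inv_lt (h : m ≤ n) (vA : Equiv.Perm (Fin m)) (vB : Equiv.Perm (Fin (n - m)))
    (x : Fin n) (hx : (x : ℕ) < n - m) :
    ((skew h vA vB)⁻¹ x : ℕ) = m + (vB⁻¹ ⟨(x : ℕ), hx⟩ : ℕ) := by
  set b : Fin (n - m) := vB⁻¹ ⟨(x : ℕ), hx⟩ with hb
  have hY : (⟨m + (b : ℕ), by have := b.2; omega⟩ : Fin n) = (skew h vA vB)⁻¹ x := by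
    apply (skew h vA vB).injective
    rw [perm_apply_inv_self']
    apply Fin.ext
    rw [skew_apply_ge h vA vB _ (by simp)]
    have : (⟨((⟨m + (b : ℕ), by have := b.2; omega⟩ : Fin n) : ℕ) - m, by
        simp only [Fin.val_mk]; have := b.2; omega⟩ : Fin (n - m)) = b := by
      apply Fin.ext; simp
    rw [this, hb]
    simp
  rw [← hY]






lemma skew_apply_lt' (h : m ≤ n) (vA : Equiv.Perm (Fin m)) (vB : Equiv.Perm (Fin (n - m)))
    (x : ℕ) (hx : x < m) (pf : x < n) :
    (skew h vA vB ⟨x, pf⟩ : ℕ) = (vA ⟨x, hx⟩ : ℕ) + (n - m) := by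
  rw [skew_apply_lt h vA vB ⟨x, pf⟩ hx]

lemma skew_apply_ge' (h : m ≤ n) (vA : Equiv.Perm (Fin m)) (vB : Equiv.Perm (Fin (n - m)))
    (x : ℕ) (hx : x < n - m) (pf : m + x < n) :
    (skew h vA vB ⟨m + x, pf⟩ : ℕ) = (vB ⟨x, hx⟩ : ℕ) := by
  rw [skew_apply_ge h vA vB ⟨m + x, pf⟩ (by first | omega | (simp only [Fin.val_mk]; omega))]
  exact congrArg (fun t => ((vB t : Fin (n-m)) : ℕ)) (Fin.ext (by first | omega | (simp only [Fin.val_mk]; omega)))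

lemma invCount_skew (h : m ≤ n) (vA : Equiv.Perm (Fin m)) (vB : Equiv.Perm (Fin (n - m))) :
    invCount (skew h vA vB) = invCount vA + invCount vB + m * (n - m) := by
  classical
  set w := skew h vA vB with hw
  have wlt : ∀ (x : ℕ) (hx : x < m) (pf : x < n),
      (w ⟨x, pf⟩ : ℕ) = (vA ⟨x, hx⟩ : ℕ) + (n - m) := fun x hx pf => skew_apply_lt' h vA vB x hx pf
  have wge : ∀ (x : ℕ) (hx : x < n - m) (pf : m + x < n),
      (w ⟨m + x, pf⟩ : ℕ) = (vB ⟨x, hx⟩ : ℕ) := fun x hx pf => skew_apply_ge' h vA vB x hx pf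
  have wge2 : ∀ (i : Fin n) (hi : ¬ (i : ℕ) < m),
      (w i : ℕ) = (vB ⟨(i:ℕ) - m, by have := i.2; omega⟩ : ℕ) := fun i hi => skew_apply_ge h vA vB i hi
  have wlt2 : ∀ (i : Fin n) (hi : (i : ℕ) < m),
      (w i : ℕ) = (vA ⟨(i:ℕ), hi⟩ : ℕ) + (n - m) := fun i hi => skew_apply_lt h vA vB i hi
  have split1 := Finset.card_filter_add_card_filter_not
    (s := univ.filter fun p : Fin n × Fin n => p.1 < p.2 ∧ w p.2 < w p.1)
    (fun p : Fin n × Fin n => (p.2 : ℕ) < m)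
  have split2 := Finset.card_filter_add_card_filter_not
    (s := (univ.filter fun p : Fin n × Fin n => p.1 < p.2 ∧ w p.2 < w p.1).filter
      (fun p : Fin n × Fin n => ¬ (p.2 : ℕ) < m))
    (fun p : Fin n × Fin n => (p.1 : ℕ) < m)
  have hAA : ((univ.filter fun p : Fin n × Fin n => p.1 < p.2 ∧ w p.2 < w p.1).filter
      (fun p : Fin n × Fin n => (p.2 : ℕ) < m)).card = invCount vA := by
    symm; unfold invCount
    apply Finset.card_bij (fun (a : Fin m × Fin m) _ =>
      ((⟨(a.1 : ℕ), lt_of_lt_of_le a.1.2 h⟩ : Fin n), (⟨(a.2 : ℕ), lt_of_lt_of_le a.2.2 h⟩ : Fin n)))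
    · intro a ha
      simp only [mem_filter, mem_univ, true_and] at ha ⊢
      obtain ⟨h1, h2⟩ := ha
      rw [Fin.lt_def] at h1 h2
      have e1 := wlt (a.1 : ℕ) a.1.2 (lt_of_lt_of_le a.1.2 h)
      have e2 := wlt (a.2 : ℕ) a.2.2 (lt_of_lt_of_le a.2.2 h)
      have r1 : (vA ⟨(a.1:ℕ), a.1.2⟩ : ℕ) = (vA a.1 : ℕ) :=
        congrArg (fun t => ((vA t) : ℕ)) (Fin.ext rfl)
      have r2 : (vA ⟨(a.2:ℕ), a.2.2⟩ : ℕ) = (vA a.2 : ℕ) :=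
        congrArg (fun t => ((vA t) : ℕ)) (Fin.ext rfl)
      refine ⟨⟨Fin.lt_def.2 (by first | omega | (simp only [Fin.val_mk]; omega)), Fin.lt_def.2 ?_⟩,
        by first | omega | (simp only [Fin.val_mk]; omega)⟩
      rw [e2, e1]
      omega
    · intro a _ b _ hab
      have h1 := congrArg (fun x => ((Prod.fst x : Fin n) : ℕ)) hab
      have h2 := congrArg (fun x => ((Prod.snd x : Fin n) : ℕ)) hab
      simp only [Fin.val_mk] at h1 h2
      exact Prod.ext (Fin.ext h1) (Fin.ext h2)
    · intro b hb
      simp only [mem_filter, mem_univ, true_and] at hb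
      obtain ⟨⟨h1, h2⟩, h3⟩ := hb
      rw [Fin.lt_def] at h1 h2
      have hb1 : (b.1 : ℕ) < m := lt_trans h1 h3
      refine ⟨(⟨(b.1 : ℕ), hb1⟩, ⟨(b.2 : ℕ), h3⟩), ?_, ?_⟩
      · simp only [mem_filter, mem_univ, true_and]
        have e1 := wlt2 b.1 hb1
        have e2 := wlt2 b.2 h3
        refine ⟨Fin.lt_def.2 (by first | omega | (simp only [Fin.val_mk]; omega)),
          Fin.lt_def.2 (by first | omega | (simp only [Fin.val_mk]; omega))⟩
      · apply Prod.ext <;> apply Fin.ext <;> simp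
  have hBB : (((univ.filter fun p : Fin n × Fin n => p.1 < p.2 ∧ w p.2 < w p.1).filter
      (fun p : Fin n × Fin n => ¬ (p.2 : ℕ) < m)).filter
      (fun p : Fin n × Fin n => ¬ (p.1 : ℕ) < m)).card = invCount vB := by
    symm; unfold invCount
    apply Finset.card_bij (fun (a : Fin (n-m) × Fin (n-m)) _ =>
      ((⟨m + (a.1 : ℕ), by have := a.1.2; omega⟩ : Fin n),
       (⟨m + (a.2 : ℕ), by have := a.2.2; omega⟩ : Fin n)))
    · intro a ha
      simp only [mem_filter, mem_univ, true_and] at ha ⊢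
      obtain ⟨h1, h2⟩ := ha
      rw [Fin.lt_def] at h1 h2
      have e1 := wge (a.1 : ℕ) a.1.2 (by have := a.1.2; omega)
      have e2 := wge (a.2 : ℕ) a.2.2 (by have := a.2.2; omega)
      have r1 : (vB ⟨(a.1:ℕ), a.1.2⟩ : ℕ) = (vB a.1 : ℕ) :=
        congrArg (fun t => ((vB t) : ℕ)) (Fin.ext rfl)
      have r2 : (vB ⟨(a.2:ℕ), a.2.2⟩ : ℕ) = (vB a.2 : ℕ) :=
        congrArg (fun t => ((vB t) : ℕ)) (Fin.ext rfl)
      refine ⟨⟨⟨Fin.lt_def.2 (by first | omega | (simp only [Fin.val_mk]; omega)), Fin.lt_def.2 ?_⟩,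
        by first | omega | (simp only [Fin.val_mk]; omega)⟩, by first | omega | (simp only [Fin.val_mk]; omega)⟩
      rw [e2, e1]
      omega
    · intro a _ b _ hab
      have h1 := congrArg (fun x => ((Prod.fst x : Fin n) : ℕ)) hab
      have h2 := congrArg (fun x => ((Prod.snd x : Fin n) : ℕ)) hab
      simp only [Fin.val_mk] at h1 h2
      exact Prod.ext (Fin.ext (by omega)) (Fin.ext (by omega))
    · intro b hb
      simp only [mem_filter, mem_univ, true_and] at hb
      obtain ⟨⟨⟨h1, h2⟩, h3⟩, h4⟩ := hb
      rw [Fin.lt_def] at h1 h2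
      refine ⟨(⟨(b.1 : ℕ) - m, by have := b.1.2; omega⟩,
               ⟨(b.2 : ℕ) - m, by have := b.2.2; omega⟩), ?_, ?_⟩
      · simp only [mem_filter, mem_univ, true_and]
        have e1 := wge2 b.1 h4
        have e2 := wge2 b.2 h3
        have r1 : (vB ⟨(b.1:ℕ) - m, by have := b.1.2; omega⟩ : ℕ)
            = (vB ⟨(b.1:ℕ) - m, by have := b.1.2; omega⟩ : ℕ) := rfl
        refine ⟨Fin.lt_def.2 ?_, Fin.lt_def.2 ?_⟩
        · simp only [Fin.val_mk]; omega
        · omega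
      · apply Prod.ext <;> apply Fin.ext <;> simp only [Fin.val_mk] <;> omega
  have hX : (((univ.filter fun p : Fin n × Fin n => p.1 < p.2 ∧ w p.2 < w p.1).filter
      (fun p : Fin n × Fin n => ¬ (p.2 : ℕ) < m)).filter
      (fun p : Fin n × Fin n => (p.1 : ℕ) < m)).card = m * (n - m) := by
    have hcard : ((univ : Finset (Fin m × Fin (n-m)))).card = m * (n - m) := by
      simp [Finset.card_univ]
    rw [← hcard]; symm
    apply Finset.card_bij (fun (a : Fin m × Fin (n-m)) _ =>
      ((⟨(a.1 : ℕ), lt_of_lt_of_le a.1.2 h⟩ : Fin n),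
       (⟨m + (a.2 : ℕ), by have := a.2.2; omega⟩ : Fin n)))
    · intro a _
      simp only [mem_filter, mem_univ, true_and]
      have e1 := wlt (a.1 : ℕ) a.1.2 (lt_of_lt_of_le a.1.2 h)
      have e2 := wge (a.2 : ℕ) a.2.2 (by have := a.2.2; omega)
      have bd1 := (vA ⟨(a.1:ℕ), a.1.2⟩).2
      have bd2 := (vB ⟨(a.2:ℕ), a.2.2⟩).2
      refine ⟨⟨⟨Fin.lt_def.2 (by first | omega | (simp only [Fin.val_mk]; omega)), Fin.lt_def.2 ?_⟩,
        by first | omega | (simp only [Fin.val_mk]; omega)⟩, by first | omega | (simp only [Fin.val_mk]; omega)⟩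
      rw [e2, e1]
      omega
    · intro a _ b _ hab
      have h1 := congrArg (fun x => ((Prod.fst x : Fin n) : ℕ)) hab
      have h2 := congrArg (fun x => ((Prod.snd x : Fin n) : ℕ)) hab
      simp only [Fin.val_mk] at h1 h2
      exact Prod.ext (Fin.ext h1) (Fin.ext (by omega))
    · intro b hb
      simp only [mem_filter, mem_univ, true_and] at hb
      obtain ⟨⟨⟨h1, h2⟩, h3⟩, h4⟩ := hb
      refine ⟨(⟨(b.1 : ℕ), h4⟩, ⟨(b.2 : ℕ) - m, by have := b.2.2; omega⟩), mem_univ _, ?_⟩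
      apply Prod.ext <;> apply Fin.ext <;> simp only [Fin.val_mk] <;> omega
  have hSw : invCount w = (univ.filter fun p : Fin n × Fin n => p.1 < p.2 ∧ w p.2 < w p.1).card := rfl
  omega



end Skew


section Blocks
open Finset
variable {n m : ℕ}

lemma invCount_le_of_wle {u v : Equiv.Perm (Fin n)} (h : wle u v) :
    invCount u ≤ invCount v := by
  unfold wle at h; omega

lemma card_filter_val_lt (n a : ℕ) (ha : a ≤ n) :
    (univ.filter (fun x : Fin n => (x : ℕ) < a)).card = a := by
  have key : (univ : Finset (Fin a)).card = (univ.filter (fun x : Fin n => (x : ℕ) < a)).card := by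
    apply Finset.card_bij (fun (x : Fin a) _ => (⟨(x : ℕ), lt_of_lt_of_le x.2 ha⟩ : Fin n))
    · intro x _; simp only [mem_filter, mem_univ, true_and, Fin.val_mk]; exact x.2
    · intro x _ y _ hxy
      exact Fin.ext (by simpa using congrArg Fin.val hxy)
    · intro b hb
      simp only [mem_filter, mem_univ, true_and] at hb
      exact ⟨⟨(b : ℕ), hb⟩, mem_univ _, Fin.ext rfl⟩
  rw [← key]; simp

lemma card_filter_val_ge (n a : ℕ) (ha : a ≤ n) :
    (univ.filter (fun x : Fin n => a ≤ (x : ℕ))).card = n - a := by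
  have h1 := Finset.card_filter_add_card_filter_not
    (s := (univ : Finset (Fin n))) (fun x : Fin n => (x : ℕ) < a)
  have h2 : (univ.filter (fun x : Fin n => ¬ (x : ℕ) < a))
      = (univ.filter (fun x : Fin n => a ≤ (x : ℕ))) := by
    apply Finset.filter_congr; intro x _; simp [not_lt]
  rw [card_filter_val_lt n a ha, h2] at h1
  have h3 : (univ : Finset (Fin n)).card = n := by simp
  omega

/-- positions below the cut correspond exactly to the top `m` values. -/
lemma cut_blockIff (hm1 : 1 ≤ m) (hmn : m < n) (π : Equiv.Perm (Fin n))
    (cut : ∀ i j : Fin n, (i : ℕ) < m → m ≤ (j : ℕ) → π j < π i) :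
    ∀ i : Fin n, (i : ℕ) < m ↔ n - m ≤ (π i : ℕ) := by
  intro i
  constructor
  · intro hi
    have hinj : Set.InjOn π (univ.filter (fun x : Fin n => m ≤ (x : ℕ))) :=
      fun x _ y _ hxy => π.injective hxy
    have hmaps : ∀ x ∈ univ.filter (fun x : Fin n => m ≤ (x : ℕ)),
        π x ∈ univ.filter (fun y : Fin n => y < π i) := by
      intro x hx
      simp only [mem_filter, mem_univ, true_and] at hx ⊢
      exact cut i x hi hx
    have hcard := Finset.card_le_card_of_injOn π hmaps hinj
    rw [card_filter_val_ge n m hmn.le, card_filter_lt_fin n (π i)] at hcard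
    exact hcard
  · intro hv
    by_contra hi
    push_neg at hi
    have hinj : Set.InjOn π (univ.filter (fun x : Fin n => (x : ℕ) < m)) :=
      fun x _ y _ hxy => π.injective hxy
    have hmaps : ∀ x ∈ univ.filter (fun x : Fin n => (x : ℕ) < m),
        π x ∈ univ.filter (fun y : Fin n => π i < y) := by
      intro x hx
      simp only [mem_filter, mem_univ, true_and] at hx ⊢
      exact cut x i hx hi
    have hcard := Finset.card_le_card_of_injOn π hmaps hinj
    rw [card_filter_val_lt n m hmn.le, card_filter_gt_fin n (π i)] at hcard
    omega

/-- any `v ≥ π` (weak order) has the same block structure. -/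
lemma wle_block (hm1 : 1 ≤ m) (hmn : m < n) (π v : Equiv.Perm (Fin n))
    (hbl : ∀ i : Fin n, (i : ℕ) < m ↔ n - m ≤ (π i : ℕ))
    (hwle : wle π v) :
    ∀ i : Fin n, (i : ℕ) < m ↔ n - m ≤ (v i : ℕ) := by
  have K := (wle_iff π v).1 hwle
  -- step 1 : the inverse image of top values sits in the first m positions
  have step1 : ∀ x : Fin n, n - m ≤ (x : ℕ) → ((v⁻¹ x : Fin n) : ℕ) < m := by
    intro x hx
    have hlow : ∀ a : Fin n, (a : ℕ) < n - m → v⁻¹ x < v⁻¹ a := by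
      intro a ha
      have hp : ((π⁻¹ x : Fin n) : ℕ) < m := by
        rw [hbl (π⁻¹ x)]; rw [perm_apply_inv_self']; exact hx
      have hq : ¬ ((π⁻¹ a : Fin n) : ℕ) < m := by
        rw [hbl (π⁻¹ a)]; rw [perm_apply_inv_self']; omega
      have hpq : (π⁻¹ x : Fin n) < π⁻¹ a := Fin.lt_def.2 (by omega)
      have hval : π (π⁻¹ a) < π (π⁻¹ x) := by
        rw [perm_apply_inv_self', perm_apply_inv_self']
        exact Fin.lt_def.2 (by omega)
      have := K (π⁻¹ x) (π⁻¹ a) hpq hval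
      rwa [perm_apply_inv_self', perm_apply_inv_self'] at this
    have hinj : Set.InjOn ⇑v⁻¹ (univ.filter (fun a : Fin n => (a : ℕ) < n - m)) :=
      fun a _ b _ hab => (v⁻¹).injective hab
    have hmaps : ∀ a ∈ univ.filter (fun a : Fin n => (a : ℕ) < n - m),
        v⁻¹ a ∈ univ.filter (fun y : Fin n => v⁻¹ x < y) := by
      intro a ha
      simp only [mem_filter, mem_univ, true_and] at ha ⊢
      exact hlow a ha
    have hcard := Finset.card_le_card_of_injOn ⇑v⁻¹ hmaps hinj
    rw [card_filter_val_lt n (n - m) (by omega), card_filter_gt_fin n (v⁻¹ x)] at hcard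
    omega
  intro i
  constructor
  · intro hi
    by_contra hvi
    push_neg at hvi
    set S := univ.filter (fun x : Fin n => n - m ≤ (x : ℕ)) with hS
    set T := univ.filter (fun y : Fin n => (y : ℕ) < m) with hT
    have himg : S.image ⇑v⁻¹ ⊆ T := by
      intro y hy
      simp only [hS, hT, Finset.mem_image, mem_filter, mem_univ, true_and] at hy ⊢
      obtain ⟨x, hx, rfl⟩ := hy
      exact step1 x hx
    have hcardS : (S.image ⇑v⁻¹).card = S.card :=
      Finset.card_image_of_injective _ (v⁻¹).injective
    have hST : T.card ≤ (S.image ⇑v⁻¹).card := by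
      rw [hcardS, hS, hT, card_filter_val_ge n (n - m) (by omega),
        card_filter_val_lt n m hmn.le]
      omega
    have heq : S.image ⇑v⁻¹ = T := Finset.eq_of_subset_of_card_le himg hST
    have hiT : i ∈ T := by simp [hT, hi]
    rw [← heq] at hiT
    simp only [Finset.mem_image, hS, mem_filter, mem_univ, true_and] at hiT
    obtain ⟨x, hx, hxi⟩ := hiT
    have : v i = x := by rw [← hxi, perm_apply_inv_self']
    omega
  · intro hvi
    have := step1 (v i) hvi
    rwa [perm_inv_apply_self'] at this

end Blocks

section Parts
open Finset
variable {n m : ℕ}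

noncomputable def partA (hmn : m < n) (w : Equiv.Perm (Fin n))
    (Hw : ∀ i : Fin n, (i : ℕ) < m ↔ n - m ≤ (w i : ℕ)) : Equiv.Perm (Fin m) :=
  Equiv.ofBijective (fun i : Fin m =>
      (⟨(w ⟨(i : ℕ), lt_trans i.2 hmn⟩ : ℕ) - (n - m), by
        have h1 := (Hw ⟨(i : ℕ), lt_trans i.2 hmn⟩).1 i.2
        have h2 := (w ⟨(i : ℕ), lt_trans i.2 hmn⟩).2
        omega⟩ : Fin m))
    ((Finite.injective_iff_bijective).1 (by
      intro i j hij
      have h1 := (Hw ⟨(i : ℕ), lt_trans i.2 hmn⟩).1 i.2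
      have h1' := (Hw ⟨(j : ℕ), lt_trans j.2 hmn⟩).1 j.2
      have hv := congrArg Fin.val hij
      simp only [Fin.val_mk] at hv
      have heq : w ⟨(i : ℕ), lt_trans i.2 hmn⟩ = w ⟨(j : ℕ), lt_trans j.2 hmn⟩ :=
        Fin.ext (by omega)
      have := congrArg Fin.val (w.injective heq)
      simp only [Fin.val_mk] at this
      exact Fin.ext this))

lemma partA_val (hmn : m < n) (w : Equiv.Perm (Fin n))
    (Hw : ∀ i : Fin n, (i : ℕ) < m ↔ n - m ≤ (w i : ℕ)) (i : Fin m) :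
    (partA hmn w Hw i : ℕ) = (w ⟨(i : ℕ), lt_trans i.2 hmn⟩ : ℕ) - (n - m) := rfl

noncomputable def partB (hmn : m < n) (w : Equiv.Perm (Fin n))
    (Hw : ∀ i : Fin n, (i : ℕ) < m ↔ n - m ≤ (w i : ℕ)) : Equiv.Perm (Fin (n - m)) :=
  Equiv.ofBijective (fun i : Fin (n - m) =>
      (⟨(w ⟨m + (i : ℕ), by have := i.2; omega⟩ : ℕ), by
        have h1 := (Hw ⟨m + (i : ℕ), by have := i.2; omega⟩)
        simp only [Fin.val_mk] at h1
        have h2 := (w ⟨m + (i : ℕ), by have := i.2; omega⟩).2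
        omega⟩ : Fin (n - m)))
    ((Finite.injective_iff_bijective).1 (by
      intro i j hij
      have hv := congrArg Fin.val hij
      simp only [Fin.val_mk] at hv
      have heq : w ⟨m + (i : ℕ), by have := i.2; omega⟩
          = w ⟨m + (j : ℕ), by have := j.2; omega⟩ := Fin.ext hv
      have := congrArg Fin.val (w.injective heq)
      simp only [Fin.val_mk] at this
      exact Fin.ext (by omega)))

lemma partB_val (hmn : m < n) (w : Equiv.Perm (Fin n))
    (Hw : ∀ i : Fin n, (i : ℕ) < m ↔ n - m ≤ (w i : ℕ)) (i : Fin (n - m)) :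
    (partB hmn w Hw i : ℕ) = (w ⟨m + (i : ℕ), by have := i.2; omega⟩ : ℕ) := rfl

lemma skew_partA_partB (hmn : m < n) (w : Equiv.Perm (Fin n))
    (Hw : ∀ i : Fin n, (i : ℕ) < m ↔ n - m ≤ (w i : ℕ)) :
    skew hmn.le (partA hmn w Hw) (partB hmn w Hw) = w := by
  apply Equiv.ext
  intro i
  apply Fin.ext
  by_cases hi : (i : ℕ) < m
  · rw [skew_apply_lt hmn.le _ _ i hi]
    have e1 : (partA hmn w Hw ⟨(i : ℕ), hi⟩ : ℕ)
        = (w ⟨(i : ℕ), lt_trans hi hmn⟩ : ℕ) - (n - m) := partA_val hmn w Hw ⟨(i : ℕ), hi⟩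
    have e2 : w ⟨(i : ℕ), lt_trans hi hmn⟩ = w i := congrArg w (Fin.ext rfl)
    have h1 := (Hw i).1 hi
    rw [e1]
    rw [congrArg Fin.val e2]
    omega
  · rw [skew_apply_ge hmn.le _ _ i hi]
    have e1 := partB_val hmn w Hw ⟨(i : ℕ) - m, by have := i.2; omega⟩
    have e2 : w ⟨m + ((i : ℕ) - m), by have := i.2; omega⟩ = w i :=
      congrArg w (Fin.ext (by simp only [Fin.val_mk]; omega))
    rw [e1, congrArg Fin.val e2]

lemma skew_pair_inj (h : m ≤ n) (a a' : Equiv.Perm (Fin m)) (b b' : Equiv.Perm (Fin (n - m)))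
    (heq : skew h a b = skew h a' b') : a = a' ∧ b = b' := by
  constructor
  · apply Equiv.ext
    intro p
    have hv := congrArg (fun e : Equiv.Perm (Fin n) => (e ⟨(p : ℕ), lt_of_lt_of_le p.2 h⟩ : ℕ)) heq
    rw [skew_apply_lt' h a b (p : ℕ) p.2 (lt_of_lt_of_le p.2 h),
      skew_apply_lt' h a' b' (p : ℕ) p.2 (lt_of_lt_of_le p.2 h)] at hv
    have r : (⟨(p : ℕ), p.2⟩ : Fin m) = p := Fin.ext rfl
    rw [r] at hv
    exact Fin.ext (by omega)
  · apply Equiv.ext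
    intro p
    have hv := congrArg (fun e : Equiv.Perm (Fin n) =>
      (e ⟨m + (p : ℕ), by have := p.2; omega⟩ : ℕ)) heq
    rw [skew_apply_ge' h a b (p : ℕ) p.2 (by have := p.2; omega),
      skew_apply_ge' h a' b' (p : ℕ) p.2 (by have := p.2; omega)] at hv
    have r : (⟨(p : ℕ), p.2⟩ : Fin (n - m)) = p := Fin.ext rfl
    rw [r] at hv
    exact Fin.ext hv

set_option maxHeartbeats 1000000 in
lemma wle_skew_iff (h : m ≤ n) (σA vA : Equiv.Perm (Fin m)) (σB vB : Equiv.Perm (Fin (n - m))) :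
    wle (skew h σA σB) (skew h vA vB) ↔ wle σA vA ∧ wle σB vB := by
  rw [wle_iff, wle_iff, wle_iff]
  constructor
  · intro K
    constructor
    · intro p q hpq hσ
      set P : Fin n := ⟨(p : ℕ), lt_of_lt_of_le p.2 h⟩ with hPd
      set Q : Fin n := ⟨(q : ℕ), lt_of_lt_of_le q.2 h⟩ with hQd
      have eP : (skew h σA σB P : ℕ) = (σA ⟨(p : ℕ), p.2⟩ : ℕ) + (n - m) :=
        skew_apply_lt' h σA σB (p : ℕ) p.2 _
      have eQ : (skew h σA σB Q : ℕ) = (σA ⟨(q : ℕ), q.2⟩ : ℕ) + (n - m) :=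
        skew_apply_lt' h σA σB (q : ℕ) q.2 _
      have rP : (⟨(p : ℕ), p.2⟩ : Fin m) = p := Fin.ext rfl
      have rQ : (⟨(q : ℕ), q.2⟩ : Fin m) = q := Fin.ext rfl
      rw [rP] at eP; rw [rQ] at eQ
      have hσv : (σA q : ℕ) < (σA p : ℕ) := Fin.lt_def.1 hσ
      have KPQ := K P Q (Fin.lt_def.2 (Fin.lt_def.1 hpq))
        (Fin.lt_def.2 (by omega))
      have iP : ((skew h vA vB)⁻¹ (skew h σA σB P) : ℕ) = (vA⁻¹ (σA p) : ℕ) := by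
        rw [skew_inv_ge h vA vB _ (by omega)]
        exact congrArg (fun t => ((vA⁻¹ t : Fin m) : ℕ)) (Fin.ext (by simp only [Fin.val_mk]; omega))
      have iQ : ((skew h vA vB)⁻¹ (skew h σA σB Q) : ℕ) = (vA⁻¹ (σA q) : ℕ) := by
        rw [skew_inv_ge h vA vB _ (by omega)]
        exact congrArg (fun t => ((vA⁻¹ t : Fin m) : ℕ)) (Fin.ext (by simp only [Fin.val_mk]; omega))
      have := Fin.lt_def.1 KPQ
      exact Fin.lt_def.2 (by omega)
    · intro p q hpq hσ
      set P : Fin n := ⟨m + (p : ℕ), by have := p.2; omega⟩ with hPd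
      set Q : Fin n := ⟨m + (q : ℕ), by have := q.2; omega⟩ with hQd
      have eP : (skew h σA σB P : ℕ) = (σB ⟨(p : ℕ), p.2⟩ : ℕ) :=
        skew_apply_ge' h σA σB (p : ℕ) p.2 _
      have eQ : (skew h σA σB Q : ℕ) = (σB ⟨(q : ℕ), q.2⟩ : ℕ) :=
        skew_apply_ge' h σA σB (q : ℕ) q.2 _
      have rP : (⟨(p : ℕ), p.2⟩ : Fin (n - m)) = p := Fin.ext rfl
      have rQ : (⟨(q : ℕ), q.2⟩ : Fin (n - m)) = q := Fin.ext rfl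
      rw [rP] at eP; rw [rQ] at eQ
      have hσv : (σB q : ℕ) < (σB p : ℕ) := Fin.lt_def.1 hσ
      have hbP := (σB p).2
      have hbQ := (σB q).2
      have hpqv := Fin.lt_def.1 hpq
      have KPQ := K P Q (Fin.lt_def.2 (by show m + (p : ℕ) < m + (q : ℕ); omega))
        (Fin.lt_def.2 (by omega))
      have iP : ((skew h vA vB)⁻¹ (skew h σA σB P) : ℕ) = m + (vB⁻¹ (σB p) : ℕ) := by
        rw [skew_inv_lt h vA vB _ (by omega)]
        exact congrArg (fun t => m + ((vB⁻¹ t : Fin (n - m)) : ℕ)) (Fin.ext (by simp only [Fin.val_mk]; omega))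
      have iQ : ((skew h vA vB)⁻¹ (skew h σA σB Q) : ℕ) = m + (vB⁻¹ (σB q) : ℕ) := by
        rw [skew_inv_lt h vA vB _ (by omega)]
        exact congrArg (fun t => m + ((vB⁻¹ t : Fin (n - m)) : ℕ)) (Fin.ext (by simp only [Fin.val_mk]; omega))
      have := Fin.lt_def.1 KPQ
      exact Fin.lt_def.2 (by omega)
  · rintro ⟨KA, KB⟩ P Q hPQ hval
    have hPQv := Fin.lt_def.1 hPQ
    have hvalv := Fin.lt_def.1 hval
    by_cases hp : (P : ℕ) < m <;> by_cases hq : (Q : ℕ) < m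
    · -- both in A block
      have eP := skew_apply_lt h σA σB P hp
      have eQ := skew_apply_lt h σA σB Q hq
      have hlt : σA ⟨(Q : ℕ), hq⟩ < σA ⟨(P : ℕ), hp⟩ := Fin.lt_def.2 (by omega)
      have hKA := KA ⟨(P : ℕ), hp⟩ ⟨(Q : ℕ), hq⟩ (Fin.lt_def.2 (by simp only [Fin.val_mk]; omega)) hlt
      have hKAv := Fin.lt_def.1 hKA
      have iP : ((skew h vA vB)⁻¹ (skew h σA σB P) : ℕ) = (vA⁻¹ (σA ⟨(P : ℕ), hp⟩) : ℕ) := by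
        rw [skew_inv_ge h vA vB _ (by omega)]
        exact congrArg (fun t => ((vA⁻¹ t : Fin m) : ℕ)) (Fin.ext (by simp only [Fin.val_mk]; omega))
      have iQ : ((skew h vA vB)⁻¹ (skew h σA σB Q) : ℕ) = (vA⁻¹ (σA ⟨(Q : ℕ), hq⟩) : ℕ) := by
        rw [skew_inv_ge h vA vB _ (by omega)]
        exact congrArg (fun t => ((vA⁻¹ t : Fin m) : ℕ)) (Fin.ext (by simp only [Fin.val_mk]; omega))
      exact Fin.lt_def.2 (by omega)
    · -- cross block
      have eP := skew_apply_lt h σA σB P hp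
      have eQ := skew_apply_ge h σA σB Q hq
      have hbQ := (σB ⟨(Q : ℕ) - m, by have := Q.2; omega⟩).2
      have iP : ((skew h vA vB)⁻¹ (skew h σA σB P) : ℕ)
          = (vA⁻¹ ⟨(skew h σA σB P : ℕ) - (n - m), by have := (skew h σA σB P).2; omega⟩ : ℕ) :=
        skew_inv_ge h vA vB _ (by omega)
      have iQ : ((skew h vA vB)⁻¹ (skew h σA σB Q) : ℕ)
          = m + (vB⁻¹ ⟨(skew h σA σB Q : ℕ), by omega⟩ : ℕ) :=
        skew_inv_lt h vA vB _ (by omega)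
      have bd := (vA⁻¹ ⟨(skew h σA σB P : ℕ) - (n - m), by have := (skew h σA σB P).2; omega⟩).2
      exact Fin.lt_def.2 (by omega)
    · omega
    · -- both in B block
      have eP := skew_apply_ge h σA σB P hp
      have eQ := skew_apply_ge h σA σB Q hq
      have hlt : σB ⟨(Q : ℕ) - m, by have := Q.2; omega⟩ < σB ⟨(P : ℕ) - m, by have := P.2; omega⟩ :=
        Fin.lt_def.2 (by omega)
      have hKB := KB ⟨(P : ℕ) - m, by have := P.2; omega⟩ ⟨(Q : ℕ) - m, by have := Q.2; omega⟩
        (Fin.lt_def.2 (by simp only [Fin.val_mk]; omega)) hlt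
      have hKBv := Fin.lt_def.1 hKB
      have hltP : (skew h σA σB P : ℕ) < n - m := by
        rw [eP]; exact (σB _).2
      have hltQ : (skew h σA σB Q : ℕ) < n - m := by
        rw [eQ]; exact (σB _).2
      have iP0 := skew_inv_lt h vA vB (skew h σA σB P) hltP
      have iQ0 := skew_inv_lt h vA vB (skew h σA σB Q) hltQ
      have rPe : (vB⁻¹ (⟨(skew h σA σB P : ℕ), hltP⟩ : Fin (n - m)) : ℕ)
          = (vB⁻¹ (σB ⟨(P : ℕ) - m, by have := P.2; omega⟩) : ℕ) :=
        congrArg (fun t => ((vB⁻¹ t : Fin (n - m)) : ℕ)) (Fin.ext (by simp only [Fin.val_mk]; omega))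
      have rQe : (vB⁻¹ (⟨(skew h σA σB Q : ℕ), hltQ⟩ : Fin (n - m)) : ℕ)
          = (vB⁻¹ (σB ⟨(Q : ℕ) - m, by have := Q.2; omega⟩) : ℕ) :=
        congrArg (fun t => ((vB⁻¹ t : Fin (n - m)) : ℕ)) (Fin.ext (by simp only [Fin.val_mk]; omega))
      exact Fin.lt_def.2 (by omega)

end Parts

/-- If `π ∈ S_n` is separable with `a_1 > a_n`, then `π` is the
concatenation of a block `π_A` on the letters `{n-m+1,…,n}` and a block `π_B` on the
letters `{1,…,n-m}` (0-indexed below; `σA`, `σB` are the renormalized blocks), and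
`F(V_π, q) = F(V_{σ_A}, q) · F(V_{σ_B}, q)`. -/
theorem FV_eq_mul_of_first_gt_last (n : ℕ) (hn : 0 < n) (π : Equiv.Perm (Fin n))
    (hsep : IsSeparable π) (hfl : π ⟨n - 1, by omega⟩ < π ⟨0, hn⟩) :
    ∃ m : ℕ, ∃ _h1 : 1 ≤ m, ∃ hmn : m < n,
      (∀ i : Fin n, (i : ℕ) < m ↔ n - m ≤ (π i : ℕ)) ∧
      ∃ σA : Equiv.Perm (Fin m), ∃ σB : Equiv.Perm (Fin (n - m)),
        (∀ i : Fin m, (σA i : ℕ) + (n - m) = (π ⟨i, i.2.trans hmn⟩ : ℕ)) ∧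
        (∀ i : Fin (n - m),
          (σB i : ℕ) = (π ⟨m + i, by have := i.2; omega⟩ : ℕ)) ∧
        FV π = FV σA * FV σB := by
  classical
  obtain ⟨m, hm1, hmn, cut⟩ := exists_cut hn π hsep.1 hfl
  have hbl := cut_blockIff hm1 hmn π cut
  refine ⟨m, hm1, hmn, hbl, ?_⟩
  set σA := partA hmn π hbl with hσAd
  set σB := partB hmn π hbl with hσBd
  have hπ : skew hmn.le σA σB = π := skew_partA_partB hmn π hbl
  have hA : ∀ i : Fin m, (σA i : ℕ) + (n - m) = (π ⟨i, i.2.trans hmn⟩ : ℕ) := by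
    intro i
    rw [hσAd, partA_val hmn π hbl i]
    have hge := (hbl ⟨(i : ℕ), lt_trans i.2 hmn⟩).1 i.2
    have e2 : (π ⟨(i : ℕ), lt_trans i.2 hmn⟩ : ℕ) = (π ⟨(i : ℕ), i.2.trans hmn⟩ : ℕ) :=
      congrArg (fun t => ((π t : Fin n) : ℕ)) (Fin.ext rfl)
    omega
  have hB : ∀ i : Fin (n - m),
      (σB i : ℕ) = (π ⟨m + (i : ℕ), by have := i.2; omega⟩ : ℕ) := by
    intro i
    have e1 := partB_val hmn π hbl i
    have e2 : (π ⟨m + (i : ℕ), by have := i.2; omega⟩ : ℕ)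
        = (π ⟨m + (i : ℕ), by have := i.2; omega⟩ : ℕ) := rfl
    rw [e1]
  refine ⟨σA, σB, hA, hB, ?_⟩
  have hset : (Finset.univ.filter fun v => wle π v)
      = Finset.image
          (fun pr : Equiv.Perm (Fin m) × Equiv.Perm (Fin (n - m)) => skew hmn.le pr.1 pr.2)
          ((Finset.univ.filter fun x => wle σA x) ×ˢ (Finset.univ.filter fun x => wle σB x)) := by
    ext v
    simp only [Finset.mem_filter, Finset.mem_univ, true_and, Finset.mem_image,
      Finset.mem_product]
    constructor
    · intro hv
      have hblv := wle_block hm1 hmn π v hbl hv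
      refine ⟨(partA hmn v hblv, partB hmn v hblv), ?_, skew_partA_partB hmn v hblv⟩
      have hkey : wle (skew hmn.le σA σB) (skew hmn.le (partA hmn v hblv) (partB hmn v hblv)) := by
        rw [hπ, skew_partA_partB hmn v hblv]; exact hv
      have := (wle_skew_iff hmn.le σA (partA hmn v hblv) σB (partB hmn v hblv)).1 hkey
      simpa using this
    · rintro ⟨⟨a, b⟩, ⟨ha, hb⟩, rfl⟩
      simp only [Finset.mem_filter, Finset.mem_univ, true_and] at ha hb
      rw [← hπ]
      exact (wle_skew_iff hmn.le σA a σB b).2 ⟨ha, hb⟩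
  have hinj : ∀ x ∈ (Finset.univ.filter fun x => wle σA x) ×ˢ (Finset.univ.filter fun x => wle σB x),
      ∀ y ∈ (Finset.univ.filter fun x => wle σA x) ×ˢ (Finset.univ.filter fun x => wle σB x),
      (fun pr : Equiv.Perm (Fin m) × Equiv.Perm (Fin (n - m)) => skew hmn.le pr.1 pr.2) x
        = (fun pr : Equiv.Perm (Fin m) × Equiv.Perm (Fin (n - m)) => skew hmn.le pr.1 pr.2) y
      → x = y := by
    intro x _ y _ hxy
    obtain ⟨h1, h2⟩ := skew_pair_inj hmn.le x.1 y.1 x.2 y.2 hxy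
    exact Prod.ext h1 h2
  have hπcount : invCount π = invCount σA + invCount σB + m * (n - m) := by
    rw [← hπ]; exact invCount_skew hmn.le σA σB
  unfold FV
  rw [hset, Finset.sum_image hinj, Finset.sum_mul_sum, ← Finset.sum_product']
  apply Finset.sum_congr rfl
  intro pr hpr
  simp only [Finset.mem_product, Finset.mem_filter, Finset.mem_univ, true_and] at hpr
  obtain ⟨ha, hb⟩ := hpr
  have e1 := invCount_skew hmn.le pr.1 pr.2
  have lA := invCount_le_of_wle ha
  have lB := invCount_le_of_wle hb
  rw [← pow_add]
  congr 1
  omega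

end SepPerm
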